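/- Let G be a countable nontrivial ordered abelian group and K = F₂(t^g : g ∈ G) the subfield of F₂((G)) generated by all monomials. Then K is a Hahn field in F₂((G)) but the family F = { supp(a) : a ∈ K } does not satisfy (S2) closure under subsets; hence K is a Hahn field that is not a Rayner field. -/

import Mathlib

open HahnSeries Cardinal


/-- Let `G` be a countable nontrivial ordered abelian group and let
`K = 𝔽₂(t^g : g ∈ G)` be the subfield of `𝔽₂((G))` generated by all monomials. Then `K` is
a Hahn field in `𝔽₂((G))` (it contains all monomials `α t^g`), but the family
`F = {supp a : a ∈ K}` does not satisfy (S2) closure under subsets; hence `K` is a Hahn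
field that is not a Rayner field. -/
theorem hahnField_not_rayner
    {G : Type*} [AddCommGroup G] [LinearOrder G] [IsOrderedAddMonoid G] [Countable G] (hG : ∃ g : G, g ≠ 0) :
    (∀ (α : ZMod 2) (g : G), HahnSeries.single g α ∈
      Subfield.closure {x : HahnSeries G (ZMod 2) | ∃ g : G, x = HahnSeries.single g 1}) ∧
    ¬ (∀ A ∈ {S : Set G | ∃ a ∈ Subfield.closure
          {x : HahnSeries G (ZMod 2) | ∃ g : G, x = HahnSeries.single g 1}, a.support = S},
        ∀ B ⊆ A, B ∈ {S : Set G | ∃ a ∈ Subfield.closure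
          {x : HahnSeries G (ZMod 2) | ∃ g : G, x = HahnSeries.single g 1}, a.support = S}) := by
  set S : Set (HahnSeries G (ZMod 2)) := {x | ∃ g : G, x = HahnSeries.single g 1} with hS
  set K := Subfield.closure S with hK
  have hmem : ∀ (α : ZMod 2) (g : G), HahnSeries.single g α ∈ K := by
    intro α g
    fin_cases α
    · convert zero_mem K using 1; exact map_zero _
    · exact Subfield.subset_closure ⟨g, rfl⟩
  refine ⟨hmem, ?_⟩
  intro h
  -- pick a positive g
  obtain ⟨g₀, hg₀⟩ := hG
  set g : G := |g₀| with hg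
  have hgpos : 0 < g := abs_pos.mpr hg₀
  set u : HahnSeries G (ZMod 2) := 1 - HahnSeries.single g 1 with hu
  have hucoeff : ∀ c : G, c ≠ 0 → c ≠ g → u.coeff c = 0 := by
    intro c hc0 hcg
    simp [hu, HahnSeries.coeff_one, HahnSeries.coeff_single, hc0, hcg]
  have hu0 : u.coeff 0 = 1 := by
    simp [hu, HahnSeries.coeff_one, HahnSeries.coeff_single, hgpos.ne, hgpos.ne']
  have hune : u ≠ 0 := by
    intro h0
    rw [h0] at hu0
    simp at hu0
  have horderu : u.order = 0 := by
    have h1 : u.order ≤ 0 := HahnSeries.order_le_of_coeff_ne_zero (by rw [hu0]; exact one_ne_zero)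
    rcases eq_or_ne u.order 0 with h2 | h2
    · exact h2
    · have h3 : u.coeff u.order ≠ 0 := by
        rw [← HahnSeries.leadingCoeff_eq]; exact HahnSeries.leadingCoeff_ne_zero.mpr hune
      have h4 : u.order ≠ g := by
        intro hh; rw [hh] at h1; exact absurd (h1.trans_lt hgpos) (lt_irrefl _)
      exact absurd (hucoeff _ h2 h4) h3
  set a : HahnSeries G (ZMod 2) := u⁻¹ with ha
  have hane : a ≠ 0 := inv_ne_zero hune
  have hmul : u * a = 1 := mul_inv_cancel₀ hune
  have hordera : a.order = 0 := by
    have := HahnSeries.order_mul hune hane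
    rw [hmul, HahnSeries.order_one, horderu, zero_add] at this
    exact this.symm
  -- a = 1 + single g 1 * a
  have heq : a = 1 + HahnSeries.single g 1 * a := by
    have h' : a - HahnSeries.single g 1 * a = 1 := by
      rw [← hmul, hu, sub_mul, one_mul]
    exact sub_eq_iff_eq_add.mp h'
  have hcoeff : ∀ i : ℕ, a.coeff (i • g) ≠ 0 := by
    intro i
    induction i with
    | zero =>
      simpa [hordera] using (show a.coeff a.order ≠ 0 by
        rw [← HahnSeries.leadingCoeff_eq]; exact HahnSeries.leadingCoeff_ne_zero.mpr hane)
    | succ n ih =>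
      have hpos : 0 < (n + 1) • g := nsmul_pos hgpos (Nat.succ_ne_zero n)
      have h1 : (1 : HahnSeries G (ZMod 2)).coeff ((n+1) • g) = 0 := by
        simp [HahnSeries.coeff_one, hpos.ne', hgpos.ne']
      have h2 : ((n+1) • g) = n • g + g := by rw [succ_nsmul]
      have h3 : (HahnSeries.single g 1 * a).coeff (n • g + g) = a.coeff (n • g) := by
        rw [HahnSeries.coeff_single_mul_add, one_mul]
      calc a.coeff ((n+1) • g)
          = (1 + HahnSeries.single g 1 * a).coeff ((n+1) • g) := by rw [← heq]
        _ = a.coeff (n • g) := by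
            rw [HahnSeries.coeff_add, h1, zero_add, h2, h3]
        _ ≠ 0 := ih
  have hinj : Function.Injective (fun i : ℕ => i • g) := by
    have : StrictMono (fun i : ℕ => i • g) := by
      apply strictMono_nat_of_lt_succ
      intro n
      simp only [succ_nsmul]
      exact lt_add_of_pos_right _ hgpos
    exact this.injective
  have hAinf : a.support.Infinite :=
    Set.infinite_of_injective_forall_mem hinj (fun i => hcoeff i)
  have haK : a ∈ K := by
    apply Subfield.inv_mem
    exact Subfield.sub_mem _ (Subfield.one_mem _) (Subfield.subset_closure ⟨g, rfl⟩)
  -- countability of K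
  have hScount : S.Countable := by
    have : S = Set.range (fun g : G => HahnSeries.single g (1 : ZMod 2)) := by
      ext x; simp [hS, eq_comm]
    rw [this]
    exact Set.countable_range _
  have hKcount : (K : Set (HahnSeries G (ZMod 2))).Countable := by
    have hcard : #(K : Set (HahnSeries G (ZMod 2))) ≤ ℵ₀ := by
      refine (Subfield.cardinalMk_closure_le_max S).trans ?_
      exact max_le (Cardinal.mk_le_aleph0_iff.mpr hScount.to_subtype) le_rfl
    exact Set.countable_coe_iff.mp (Cardinal.mk_le_aleph0_iff.mp hcard)
  have hFcount : ({T : Set G | ∃ b ∈ K, b.support = T}).Countable := by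
    have : {T : Set G | ∃ b ∈ K, b.support = T}
        = HahnSeries.support '' (K : Set (HahnSeries G (ZMod 2))) := by
      ext T; simp [Set.mem_image]
    rw [this]
    exact hKcount.image _
  -- powerset of a.support is contained in F
  have hsub : 𝒫 a.support ⊆ {T : Set G | ∃ b ∈ K, b.support = T} := by
    intro B hB
    exact h a.support ⟨a, haK, rfl⟩ B hB
  have hPcount : (𝒫 a.support).Countable := hFcount.mono hsub
  -- contradiction via Cantor
  have hPcard : (2 : Cardinal) ^ #a.support ≤ ℵ₀ := by
    rw [← Cardinal.mk_powerset]
    exact Cardinal.mk_le_aleph0_iff.mpr hPcount.to_subtype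
  have h1 : (ℵ₀ : Cardinal) ≤ #a.support := Cardinal.infinite_iff.mp hAinf.to_subtype
  have h2 : (2 : Cardinal) ^ (ℵ₀ : Cardinal) ≤ 2 ^ #a.support :=
    Cardinal.power_le_power_left two_ne_zero h1
  have h3 := (Cardinal.cantor ℵ₀).trans_le (h2.trans hPcard)
  exact absurd h3 (lt_irrefl _)
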